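/- For the n-qubit Pauli group, if S is a subset of vertices of a graph G such that every vertex of S has an even number of neighbors in S, then the product over v in S of the stabilizer generators X_v Z^{N_v} equals (-1)^{|E(S)|} X^S Z^{N(S)}, where E(S) is the edge set of the induced subgraph on S and Z^{N(S)} places Z on exactly those vertices having an odd number of neighbors in S. -/

import Mathlib

open scoped Matrix

open scoped Classical in
/-- The number of edges of `G` inside the set `{v | x v = true}`. -/
noncomputable def edgeCountOn {V : Type*} [Fintype V] (G : SimpleGraph V) (x : V → Bool) : ℕ :=
  (G.edgeFinset.filter fun e => ∀ v ∈ e, x v = true).card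

open scoped Classical in
/-- The number of edges of the induced subgraph of `G` on `S`. -/
noncomputable def inducedEdgeCount {V : Type*} [Fintype V] (G : SimpleGraph V) (S : Finset V) : ℕ :=
  (G.edgeFinset.filter fun e => ∀ v ∈ e, v ∈ S).card

/-- The graph state of `G` in the computational basis: `ψ x = (-1)^{e(x)} / √(2^n)`.
It is the unique common `+1` eigenstate of the stabilizers `S_v = X_v Z^{N_v}`. -/
noncomputable def graphState {V : Type*} [Fintype V] (G : SimpleGraph V) :
    (V → Bool) → ℂ :=
  fun x => (-1 : ℂ) ^ edgeCountOn G x / Real.sqrt (2 ^ Fintype.card V)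

/-- The Pauli operator `X^S`, acting as `X` on every qubit in `S`. -/
noncomputable def XOp {V : Type*} [Fintype V] [DecidableEq V] (S : Finset V) :
    Matrix (V → Bool) (V → Bool) ℂ :=
  fun x y => if y = fun v => xor (x v) (decide (v ∈ S)) then 1 else 0

/-- The Pauli operator `Z^T`, acting as `Z` on every qubit in `T`. -/
noncomputable def ZOp {V : Type*} [Fintype V] [DecidableEq V] (T : Finset V) :
    Matrix (V → Bool) (V → Bool) ℂ :=
  Matrix.diagonal fun x => (-1 : ℂ) ^ (T.filter fun v => x v = true).card

/-- The stabilizer generator `S_v = X_v Z^{N_v}` of the graph state of `G`. -/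
noncomputable def stab {V : Type*} [Fintype V] [DecidableEq V] (G : SimpleGraph V)
    [DecidableRel G.Adj] (v : V) : Matrix (V → Bool) (V → Bool) ℂ :=
  XOp {v} * ZOp (G.neighborFinset v)

/-- `N(S)`: the set of vertices having an odd number of neighbours in `S`. -/
def oddNeighborhood {V : Type*} [Fintype V] [DecidableEq V] (G : SimpleGraph V)
    [DecidableRel G.Adj] (S : Finset V) : Finset V :=
  Finset.univ.filter fun u => Odd ((G.neighborFinset u).filter fun w => w ∈ S).card


open scoped symmDiff
set_option linter.unusedSectionVars false

section Aux
variable {V : Type*} [Fintype V] [DecidableEq V]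

def sft (A : Finset V) (x : V → Bool) : V → Bool := fun v => xor (x v) (decide (v ∈ A))

lemma sft_sft (A C : Finset V) (x : V → Bool) : sft C (sft A x) = sft (A ∆ C) x := by
  funext v
  simp only [sft, Finset.mem_symmDiff]
  by_cases hA : v ∈ A <;> by_cases hC : v ∈ C <;> simp [hA, hC]

noncomputable def chi (B : Finset V) (x : V → Bool) : ℂ :=
  ∏ v ∈ B, (if x v = true then (-1 : ℂ) else 1)

lemma chi_eq_pow (B : Finset V) (x : V → Bool) :
    chi B x = (-1 : ℂ) ^ (B.filter fun v => x v = true).card := by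
  rw [chi, Finset.prod_ite, Finset.prod_const, Finset.prod_const, one_pow, mul_one]

lemma chi_mul_self (B : Finset V) (x : V → Bool) : chi B x * chi B x = 1 := by
  rw [chi, ← Finset.prod_mul_distrib]
  refine Finset.prod_eq_one fun v _ => ?_
  by_cases h : x v = true <;> simp [h]

lemma chi_mul (B D : Finset V) (x : V → Bool) : chi B x * chi D x = chi (B ∆ D) x := by
  have hB : chi B x = chi (B \ D) x * chi (B ∩ D) x := by
    rw [chi, chi, chi, ← Finset.prod_union (Finset.disjoint_sdiff_inter B D),
      Finset.sdiff_union_inter]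
  have hD : chi D x = chi (D \ B) x * chi (B ∩ D) x := by
    rw [chi, chi, chi, Finset.inter_comm, ← Finset.prod_union (Finset.disjoint_sdiff_inter D B),
      Finset.sdiff_union_inter]
  have hS : chi (B ∆ D) x = chi (B \ D) x * chi (D \ B) x := by
    rw [chi, chi, chi, symmDiff_def, ← Finset.prod_union (disjoint_sdiff_sdiff)]
    rfl
  rw [hB, hD, hS]
  calc chi (B \ D) x * chi (B ∩ D) x * (chi (D \ B) x * chi (B ∩ D) x)
      = (chi (B \ D) x * chi (D \ B) x) * (chi (B ∩ D) x * chi (B ∩ D) x) := by ring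
    _ = chi (B \ D) x * chi (D \ B) x := by rw [chi_mul_self, mul_one]

lemma chi_sft (B C : Finset V) (x : V → Bool) :
    chi B (sft C x) = (-1 : ℂ) ^ ((B ∩ C).card) * chi B x := by
  have : chi B (sft C x)
      = ∏ v ∈ B, ((if v ∈ C then (-1 : ℂ) else 1) * (if x v = true then (-1 : ℂ) else 1)) := by
    refine Finset.prod_congr rfl fun v _ => ?_
    by_cases hC : v ∈ C <;> by_cases hx : x v = true <;> simp [sft, hC, hx]
  rw [this, Finset.prod_mul_distrib, ← chi]
  congr 1
  rw [Finset.prod_ite, Finset.prod_const, Finset.prod_const, one_pow, mul_one,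
    Finset.filter_mem_eq_inter]

lemma XZ_apply (A B : Finset V) (x y : V → Bool) :
    (XOp A * ZOp B) x y = if y = sft A x then chi B y else 0 := by
  rw [ZOp, Matrix.mul_diagonal, XOp, chi_eq_pow]
  show (if y = sft A x then (1:ℂ) else 0) * _ = _
  by_cases h : y = sft A x
  · rw [if_pos h, if_pos h, one_mul]
  · rw [if_neg h, if_neg h, zero_mul]

lemma key_mul (A B C D : Finset V) :
    (XOp A * ZOp B) * (XOp C * ZOp D)
      = ((-1 : ℂ) ^ ((B ∩ C).card)) • (XOp (A ∆ C) * ZOp (B ∆ D)) := by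
  ext x y
  rw [Matrix.mul_apply]
  simp only [XZ_apply, Matrix.smul_apply, smul_eq_mul]
  rw [Finset.sum_eq_single (sft A x)]
  · rw [if_pos rfl]
    by_cases h : y = sft C (sft A x)
    · have hy : y = sft (A ∆ C) x := by rw [h, sft_sft]
      rw [if_pos h, if_pos hy]
      have hAx : sft A x = sft C y := by
        rw [hy, sft_sft, symmDiff_symmDiff_cancel_right]
      rw [hAx, chi_sft, ← chi_mul]
      ring
    · have hy : ¬ y = sft (A ∆ C) x := by rw [← sft_sft]; exact h
      rw [if_neg h, if_neg hy, mul_zero, mul_zero]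
  · intro b _ hb
    rw [if_neg hb, zero_mul]
  · intro h; exact absurd (Finset.mem_univ _) h

lemma XOp_empty : (XOp (∅ : Finset V)) = 1 := by
  ext x y
  simp [XOp, Matrix.one_apply, eq_comm]

lemma ZOp_empty : (ZOp (∅ : Finset V)) = 1 := by
  ext x y
  simp [ZOp, Matrix.diagonal, Matrix.one_apply]

variable (G : SimpleGraph V) [DecidableRel G.Adj]

lemma odd_insert (a : V) (S : Finset V) (ha : a ∉ S) :
    (G.neighborFinset a) ∆ oddNeighborhood G S = oddNeighborhood G (insert a S) := by
  ext u
  have hcard : ((G.neighborFinset u).filter fun w => w ∈ insert a S).card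
      = (if a ∈ G.neighborFinset u then 1 else 0)
        + ((G.neighborFinset u).filter fun w => w ∈ S).card := by
    have hsplit : ((G.neighborFinset u).filter fun w => w ∈ insert a S)
        = ((G.neighborFinset u).filter fun w => w = a)
          ∪ ((G.neighborFinset u).filter fun w => w ∈ S) := by
      ext w
      simp only [Finset.mem_filter, Finset.mem_union, Finset.mem_insert]
      tauto
    have hdisj : Disjoint ((G.neighborFinset u).filter fun w => w = a)
        ((G.neighborFinset u).filter fun w => w ∈ S) := by
      rw [Finset.disjoint_left]
      intro w hw hw'
      simp only [Finset.mem_filter] at hw hw'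
      exact ha (hw.2 ▸ hw'.2)
    rw [hsplit, Finset.card_union_of_disjoint hdisj, Finset.filter_eq' (G.neighborFinset u) a]
    by_cases h : a ∈ G.neighborFinset u <;> simp [h]
  have hadj : a ∈ G.neighborFinset u ↔ u ∈ G.neighborFinset a := by
    simp [G.adj_comm]
  simp only [Finset.mem_symmDiff, oddNeighborhood, Finset.mem_filter, Finset.mem_univ,
    true_and, hcard, ← hadj]
  by_cases h : a ∈ G.neighborFinset u <;>
    simp [h, Nat.odd_add_one, Nat.odd_iff, Nat.even_iff] <;> omega

lemma inducedEdgeCount_eq (S : Finset V) :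
    inducedEdgeCount G S = (G.edgeFinset.filter fun e => ∀ v ∈ e, v ∈ S).card := by
  unfold inducedEdgeCount
  congr 1
  ext e
  simp [SimpleGraph.mem_edgeFinset]

lemma edge_insert (a : V) (S : Finset V) (ha : a ∉ S) :
    inducedEdgeCount G (insert a S) = inducedEdgeCount G S + (G.neighborFinset a ∩ S).card := by
  classical
  rw [inducedEdgeCount_eq, inducedEdgeCount_eq]
  have hsplit : (G.edgeFinset.filter fun e => ∀ v ∈ e, v ∈ insert a S)
      = (G.edgeFinset.filter fun e => ∀ v ∈ e, v ∈ S)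
        ∪ (G.edgeFinset.filter fun e => (∀ v ∈ e, v ∈ insert a S) ∧ a ∈ e) := by
    ext e
    simp only [Finset.mem_filter, Finset.mem_union]
    constructor
    · intro ⟨he, hall⟩
      by_cases hae : a ∈ e
      · exact Or.inr ⟨he, hall, hae⟩
      · refine Or.inl ⟨he, fun v hv => ?_⟩
        rcases Finset.mem_insert.mp (hall v hv) with h | h
        · exact absurd (h ▸ hv) hae
        · exact h
    · rintro (⟨he, hall⟩ | ⟨he, hall, _⟩)
      · exact ⟨he, fun v hv => Finset.mem_insert_of_mem (hall v hv)⟩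
      · exact ⟨he, hall⟩
  have hdisj : Disjoint (G.edgeFinset.filter fun e => ∀ v ∈ e, v ∈ S)
      (G.edgeFinset.filter fun e => (∀ v ∈ e, v ∈ insert a S) ∧ a ∈ e) := by
    rw [Finset.disjoint_left]
    intro e he he'
    simp only [Finset.mem_filter] at he he'
    exact ha (he.2 a he'.2.2)
  rw [hsplit, Finset.card_union_of_disjoint hdisj]
  congr 1
  refine (Finset.card_bij (fun w _ => s(a, w)) ?_ ?_ ?_).symm
  · intro w hw
    simp only [Finset.mem_inter, SimpleGraph.mem_neighborFinset] at hw
    simp only [Finset.mem_filter, SimpleGraph.mem_edgeFinset, SimpleGraph.mem_edgeSet]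
    refine ⟨hw.1, fun v hv => ?_, Sym2.mem_mk_left a w⟩
    rcases Sym2.mem_iff.mp hv with h | h
    · exact h ▸ Finset.mem_insert_self a S
    · exact h ▸ Finset.mem_insert_of_mem hw.2
  · intro w hw w' hw' hww
    simp only [Finset.mem_inter, SimpleGraph.mem_neighborFinset] at hw hw'
    rcases Sym2.eq_iff.mp hww with ⟨_, h⟩ | ⟨h1, h2⟩
    · exact h
    · exact absurd (h2 ▸ hw.2) ha
  · intro e he
    simp only [Finset.mem_filter, SimpleGraph.mem_edgeFinset, SimpleGraph.mem_edgeSet] at he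
    obtain ⟨he, hall, hae⟩ := he
    induction e with
    | _ u w =>
      rcases Sym2.mem_iff.mp hae with rfl | rfl
      · have hw : w ∈ G.neighborFinset a ∩ S := by
          rw [Finset.mem_inter, SimpleGraph.mem_neighborFinset]
          refine ⟨he, ?_⟩
          rcases Finset.mem_insert.mp (hall w (Sym2.mem_mk_right a w)) with h | h
          · exact absurd (h ▸ he) (G.irrefl)
          · exact h
        exact ⟨w, hw, rfl⟩
      · have hu : u ∈ G.neighborFinset a ∩ S := by
          rw [Finset.mem_inter, SimpleGraph.mem_neighborFinset]
          refine ⟨G.symm.symm _ _ he, ?_⟩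
          rcases Finset.mem_insert.mp (hall u (Sym2.mem_mk_left u a)) with h | h
          · exact absurd (h ▸ G.symm.symm _ _ he) (G.irrefl)
          · exact h
        exact ⟨u, hu, Sym2.eq_swap⟩

lemma stab_prod_aux (S : Finset V) :
    ∀ (hc : (S : Set V).Pairwise fun a b => Commute (stab G a) (stab G b)),
    S.noncommProd (stab G) hc =
      ((-1 : ℂ) ^ inducedEdgeCount G S) • (XOp S * ZOp (oddNeighborhood G S)) := by
  classical
  induction S using Finset.induction_on with
  | empty =>
    intro hc
    have he : inducedEdgeCount G (∅ : Finset V) = 0 := by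
      rw [inducedEdgeCount_eq, Finset.card_eq_zero, Finset.filter_eq_empty_iff]
      intro e _
      induction e with
      | _ u w =>
        intro h
        exact Finset.notMem_empty u (h u (Sym2.mem_mk_left u w))
    have ho : oddNeighborhood G (∅ : Finset V) = ∅ := by
      simp [oddNeighborhood, Nat.odd_iff]
    rw [Finset.noncommProd_empty, he, ho, XOp_empty, ZOp_empty, pow_zero, one_smul, one_mul]
  | @insert a S ha ih =>
    intro hc
    rw [Finset.noncommProd_insert_of_notMem _ _ _ _ ha,
      ih ((hc.mono (Finset.coe_subset.mpr (Finset.subset_insert a S)))), stab,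
      Matrix.mul_smul, key_mul]
    rw [smul_smul, ← pow_add]
    have h1 : ({a} : Finset V) ∆ S = insert a S := by
      rw [(Finset.disjoint_singleton_left.mpr ha).symmDiff_eq_sup, Finset.sup_eq_union,
        ← Finset.insert_eq]
    rw [h1, odd_insert G a S ha, edge_insert G a S ha]

end Aux

/-- If every vertex of `S` has an even number of neighbours in `S`, then
`∏_{v ∈ S} X_v Z^{N_v} = (-1)^{|E(S)|} X^S Z^{N(S)}`. -/
theorem prod_stabilizers_eq {V : Type*} [Fintype V] [DecidableEq V]
    (G : SimpleGraph V) [DecidableRel G.Adj] (S : Finset V)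
    (heven : ∀ v ∈ S, Even (((G.neighborFinset v).filter fun w => w ∈ S).card))
    (hcomm : (S : Set V).Pairwise fun a b => Commute (stab G a) (stab G b)) :
    S.noncommProd (stab G) hcomm =
      ((-1 : ℂ) ^ inducedEdgeCount G S) • (XOp S * ZOp (oddNeighborhood G S)) := by
  exact stab_prod_aux G S hcomm
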